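/- arXiv:1107.5252 — 3 statements merged into one kernel-verified Lean document; each statement's English description precedes it below -/
import Mathlib

section
/- Let P and Q be relative monads on Δ : Set → Preord, ρ : P → Q a morphism of relative monads, E a category, and M a Q-module with codomain E. Then pullback commutes with derivation: ρ*(M') = (ρ*M)' as P-modules (same object maps and same module substitutions). -/
open CategoryTheory

universe v₂ u u₂

/-- A relative monad on the functor `Δ : Set → Preord` which equips a set with the
discrete (diagonal) preorder.  Since every map out of a discretely preordered set is
monotone, a morphism `Δ X ⟶ P Y` in `Preord` is exactly a function `X → P Y`; the
value of the substitution map is a monotone map `P X ⟶ P Y`. -/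
structure RMonad : Type (u + 1) where
  obj : Type u → Type u
  ord : ∀ X : Type u, Preorder (obj X)
  unit : ∀ {X : Type u}, X → obj X
  bind : ∀ {X Y : Type u}, (X → obj Y) → obj X → obj Y
  bind_mono : ∀ {X Y : Type u} (f : X → obj Y) (a b : obj X),
      (ord X).le a b → (ord Y).le (bind f a) (bind f b)
  bind_unit : ∀ {X Y : Type u} (f : X → obj Y) (x : X), bind f (unit x) = f x
  unit_bind : ∀ {X : Type u} (p : obj X), bind unit p = p
  bind_bind : ∀ {X Y Z : Type u} (f : X → obj Y) (g : Y → obj Z) (p : obj X),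
      bind g (bind f p) = bind (fun x => bind g (f x)) p

attribute [instance] RMonad.ord

/-- The functorial action of a relative monad on `Δ`. -/
def RMonad.map (P : RMonad.{u}) {X Y : Type u} (f : X → Y) : P.obj X → P.obj Y :=
  P.bind (fun x => P.unit (f x))

/-- The shifted map: for `f : Δ V → P W`, `shift f : Δ(V + {*}) → P(W + {*})` sends
the fresh element `*` to `η(*)` and `v ∈ V` to `P(i)(f v)`, `i : W → W + {*}` being
the inclusion. -/
def RMonad.shift (P : RMonad.{u}) {X Y : Type u} (f : X → P.obj Y) :
    Option X → P.obj (Option Y)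
  | none => P.unit none
  | some x => P.map some (f x)

/-- A morphism of relative monads on `Δ`: a family of monotone maps commuting with
units and substitution. -/
structure RMonadHom (P Q : RMonad.{u}) : Type (u + 1) where
  app : ∀ X : Type u, P.obj X → Q.obj X
  mono : ∀ (X : Type u) (a b : P.obj X), a ≤ b → app X a ≤ app X b
  app_unit : ∀ {X : Type u} (x : X), app X (P.unit x) = Q.unit x
  app_bind : ∀ {X Y : Type u} (f : X → P.obj Y) (p : P.obj X),
      app Y (P.bind f p) = Q.bind (fun x => app Y (f x)) (app X p)

/-- A module over a relative monad `P` on `Δ`, with codomain a category `E`. -/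
structure DMod (P : RMonad.{u}) (E : Type u₂) [Category.{v₂} E] where
  obj : Type u → E
  msubst : ∀ {X Y : Type u}, (X → P.obj Y) → (obj X ⟶ obj Y)
  msubst_unit : ∀ X : Type u, msubst (fun x : X => P.unit x) = 𝟙 (obj X)
  msubst_msubst : ∀ {X Y Z : Type u} (f : X → P.obj Y) (g : Y → P.obj Z),
      msubst f ≫ msubst g = msubst (fun x => P.bind g (f x))

lemma RMonad.shift_unit (P : RMonad.{u}) (X : Type u) :
    P.shift (fun x : X => P.unit x) = fun x : Option X => P.unit x := by
  funext x
  cases x with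
  | none => rfl
  | some x => simp [RMonad.shift, RMonad.map, P.bind_unit]

lemma RMonad.shift_bind (P : RMonad.{u}) {X Y Z : Type u} (f : X → P.obj Y)
    (g : Y → P.obj Z) :
    P.shift (fun x => P.bind g (f x)) = fun x => P.bind (P.shift g) (P.shift f x) := by
  funext x
  cases x with
  | none => simp [RMonad.shift, P.bind_unit]
  | some x => simp [RMonad.shift, RMonad.map, P.bind_bind, P.bind_unit]

/-- The derived module: object map `V ↦ M (V + {*})`, with the substitution of `M`
precomposed with the shifted map. -/
def derivDMod {P : RMonad.{u}} {E : Type u₂} [Category.{v₂} E] (M : DMod P E) :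
    DMod P E where
  obj X := M.obj (Option X)
  msubst f := M.msubst (P.shift f)
  msubst_unit X := by
    simp only [RMonad.shift_unit, M.msubst_unit]
  msubst_msubst {X Y Z} f g := by
    simp only [M.msubst_msubst, RMonad.shift_bind]

/-- The pullback of a `Q`-module along a morphism of relative monads `h : P ⟶ Q`. -/
def pbDMod {P Q : RMonad.{u}} (h : RMonadHom P Q) {E : Type u₂} [Category.{v₂} E]
    (M : DMod Q E) : DMod P E where
  obj := M.obj
  msubst f := M.msubst (fun x => h.app _ (f x))
  msubst_unit X := by
    have : (fun x : X => h.app X (P.unit x)) = fun x : X => Q.unit x :=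
      funext fun x => h.app_unit x
    simp only [this, M.msubst_unit]
  msubst_msubst {X Y Z} f g := by
    simp only [M.msubst_msubst]
    congr 1
    funext x
    rw [h.app_bind]

/-- Pullback commutes with derivation: for a morphism `ρ : P ⟶ Q` of relative monads
on `Δ` and a `Q`-module `M` with codomain `E`, `ρ*(M') = (ρ*M)'` as `P`-modules. -/
theorem pullback_comm_deriv {E : Type u₂} [Category.{v₂} E] (P Q : RMonad.{u})
    (ρ : RMonadHom P Q) (M : DMod Q E) :
    pbDMod ρ (derivDMod M) = derivDMod (pbDMod ρ M) := by
  have key : ∀ {X Y : Type u} (f : X → P.obj Y),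
      (Q.shift fun x => ρ.app Y (f x)) = fun x => ρ.app (Option Y) (P.shift f x) := by
    intro X Y f
    funext x
    cases x with
    | none => exact (ρ.app_unit none).symm
    | some x =>
      simp only [RMonad.shift, RMonad.map, ρ.app_bind, ρ.app_unit]
  unfold pbDMod derivDMod
  congr 1
  funext X Y f
  show M.msubst (Q.shift fun x => ρ.app Y (f x)) =
      M.msubst fun x => ρ.app (Option Y) (P.shift f x)
  rw [key]
end

section
/- For any 1-signature S, the category Rep^Δ(S) of representations of S in relative monads on Δ : Set → Preord has an initial object. The underlying monad of the initial representation associates to any set V the set of terms of the language specified by S with free variables in V, equipped with the discrete (diagonal) preorder. -/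
open CategoryTheory

universe v₂ u u₂

/-- An arity is a list of natural numbers; a 1-signature is a family of arities. -/
structure Sig : Type (u + 1) where
  I : Type u
  ar : I → List ℕ

/-- Context extension: `pow n V` is `V` extended by `n` fresh variables. -/
def pow : ℕ → Type u → Type u
  | 0, V => V
  | n + 1, V => pow n (Option V)

/-- Iterated shifting of a substitution map, for derived modules. -/
def RMonad.shiftPow (P : RMonad.{u}) :
    ∀ (n : ℕ) {X Y : Type u}, (X → P.obj Y) → (pow n X → P.obj (pow n Y))
  | 0, _, _, f => f
  | n + 1, _, _, f => P.shiftPow n (P.shift f)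

/-- A representation of a 1-signature `S` in a relative monad `R` on `Δ`: for each
arity `s = [n₁, …, nₘ]` of `S`, a morphism of `R`-modules `R^s → R`, i.e.\ a family of
monotone maps commuting with the (shifted) substitutions. -/
structure SigRep (S : Sig.{u}) : Type (u + 1) where
  R : RMonad.{u}
  rep : ∀ (i : S.I) (X : Type u),
      (∀ k : Fin (S.ar i).length, R.obj (pow ((S.ar i).get k) X)) → R.obj X
  rep_mono : ∀ (i : S.I) (X : Type u)
      (a b : ∀ k : Fin (S.ar i).length, R.obj (pow ((S.ar i).get k) X)),
      (∀ k, a k ≤ b k) → rep i X a ≤ rep i X b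
  rep_hom : ∀ (i : S.I) (X Y : Type u) (f : X → R.obj Y)
      (a : ∀ k : Fin (S.ar i).length, R.obj (pow ((S.ar i).get k) X)),
      R.bind f (rep i X a)
        = rep i Y (fun k => R.bind (R.shiftPow ((S.ar i).get k) f) (a k))

/-- A morphism of representations: a morphism of the underlying relative monads
commuting with the representation module morphisms. -/
structure SigRepHom {S : Sig.{u}} (A B : SigRep S) : Type (u + 1) where
  mh : RMonadHom A.R B.R
  mh_rep : ∀ (i : S.I) (X : Type u)
      (a : ∀ k : Fin (S.ar i).length, A.R.obj (pow ((S.ar i).get k) X)),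
      mh.app X (A.rep i X a) = B.rep i X (fun k => mh.app _ (a k))

/-- The category `SigRep^Δ(S)` of representations of `S` in relative monads on `Δ`. -/
instance (S : Sig.{u}) : Category (SigRep S) where
  Hom := SigRepHom
  id A := ⟨⟨fun _ p => p, fun _ _ _ h => h, fun _ => rfl, fun _ _ => rfl⟩,
    fun _ _ _ => rfl⟩
  comp {A B C} f g := ⟨⟨fun X p => g.mh.app X (f.mh.app X p),
      fun X a b h => g.mh.mono X _ _ (f.mh.mono X a b h),
      fun x => by simp only [f.mh.app_unit, g.mh.app_unit],
      fun k p => by simp only [f.mh.app_bind, g.mh.app_bind]⟩,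
    fun i X a => by simp only [f.mh_rep, g.mh_rep]⟩
  id_comp f := rfl
  comp_id f := rfl
  assoc f g h := rfl

/-- Terms of the language specified by the 1-signature `S`, in a context extended by
`n` fresh variables: `TermN S V n` is the set of terms with free variables in
`pow n V`.  A term is either a variable, or a constructor `i` of `S` applied to
arguments living in suitably extended contexts. -/
inductive TermN (S : Sig.{u}) (V : Type u) : ℕ → Type u
  | var : ∀ {n : ℕ}, pow n V → TermN S V n
  | build : ∀ {n : ℕ} (i : S.I),
      (∀ k : Fin (S.ar i).length, TermN S V (n + (S.ar i).get k)) → TermN S V n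

/-- The set of terms of the language specified by `S` with free variables in `V`. -/
def Term (S : Sig.{u}) (V : Type u) : Type u := TermN S V 0

namespace InitialAux

variable {S : Sig.{u}}

/-- Functorial action of `pow n`. -/
def powFun : ∀ (n : ℕ) {X Y : Type u}, (X → Y) → pow n X → pow n Y
  | 0, _, _, f => f
  | n+1, _, _, f => powFun n (Option.map f)

/-- Transport of variables along an equality of depths. -/
def pvcast {V : Type u} {n m : ℕ} (h : n = m) : pow n V → pow m V :=
  fun x => h ▸ x

theorem pvcast_pvcast {V : Type u} {n m : ℕ} (h : n = m) (h' : m = n)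
    (x : pow n V) : pvcast (V := V) h' (pvcast (V := V) h x) = x := by
  subst h; rfl

theorem pvcast_succ {V : Type u} {n m : ℕ} (h : n = m) (h₂ : n + 1 = m + 1)
    (x : pow n (Option V)) :
    pvcast (V := V) h₂ x = pvcast (V := Option V) h x := by
  subst h; rfl

/-- Renaming of free variables. -/
def ren {V W : Type u} (f : V → W) : ∀ {n : ℕ}, TermN S V n → TermN S W n
  | n, .var x => .var (powFun n f x)
  | _, .build i a => .build i fun k => ren f (a k)

/-- Absorbing one `Option` of the base type into the depth index. -/
def absorbG {V : Type u} : ∀ {n m : ℕ}, n + 1 = m → TermN S (Option V) n → TermN S V m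
  | n, _, h, .var x => .var (pvcast (V := V) h (x : pow (n+1) V))
  | _, _, h, .build i a => .build i fun k => absorbG (by omega) (a k)

def absorbs : ∀ (a : ℕ) {V : Type u} {n : ℕ}, TermN S (pow a V) n → TermN S V (n + a)
  | 0, _, _, t => t
  | a+1, V, n, t => absorbG rfl (absorbs a (V := Option V) t)

/-- Extracting one `Option` out of the depth index. -/
def extractG {V : Type u} : ∀ {n m : ℕ}, n = m + 1 → TermN S V n → TermN S (Option V) m
  | _, m, h, .var x => .var ((pvcast (V := V) h x : pow (m+1) V) : pow m (Option V))
  | _, _, h, .build i a => .build i fun k => extractG (by omega) (a k)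

def extracts : ∀ (a : ℕ) {V : Type u} {n : ℕ}, TermN S V (n + a) → TermN S (pow a V) n
  | 0, _, _, t => t
  | a+1, V, n, t => extracts a (V := Option V) (extractG rfl t)

theorem absorbG_extractG {V : Type u} {n : ℕ} (t : TermN S V n) :
    ∀ {m : ℕ} (h : n = m + 1) (h' : m + 1 = n),
      absorbG h' (extractG h t) = t := by
  induction t with
  | var x => intro m h h'; subst h; rfl
  | build i a ih =>
      intro m h h'
      show TermN.build i (fun k => absorbG _ (extractG _ (a k))) = .build i a
      exact congrArg _ (funext fun k => ih k _ _)

theorem absorbs_extracts (a : ℕ) {V : Type u} {n : ℕ} (t : TermN S V (n + a)) :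
    absorbs a (extracts a t) = t := by
  induction a generalizing V with
  | zero => rfl
  | succ a ih =>
      show absorbG rfl (absorbs a (extracts a (extractG rfl t))) = t
      rw [ih (extractG rfl t)]
      exact absorbG_extractG t rfl rfl

end InitialAux
namespace InitialAux2
open InitialAux

variable {S : Sig.{u}}

/-- Shift a substitution under one fresh variable. -/
def shiftSub {V W : Type u} (f : V → Term S W) : Option V → Term S (Option W)
  | none => .var none
  | some v => ren some (f v)

/-- Lift a substitution to variables in an extended context. -/
def liftVar : ∀ (n : ℕ) {V W : Type u}, (V → Term S W) → pow n V → TermN S W n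
  | 0, _, _, f => f
  | n+1, _, _, f => fun x => absorbG rfl (liftVar n (shiftSub f) x)

/-- Substitution on terms. -/
def sub {V W : Type u} (f : V → Term S W) : ∀ {n : ℕ}, TermN S V n → TermN S W n
  | n, .var x => liftVar n f x
  | _, .build i a => .build i fun k => sub f (a k)

theorem shiftSub_var {V : Type u} :
    shiftSub (S := S) (fun v : V => .var v) = fun v => .var v := by
  funext v; cases v <;> rfl

theorem liftVar_var : ∀ (n : ℕ) {V : Type u} (x : pow n V),
    liftVar (S := S) n (fun v => .var v) x = .var x := by
  intro n
  induction n with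
  | zero => intro V x; rfl
  | succ n ih =>
      intro V x
      show absorbG rfl (liftVar n (shiftSub fun v => .var v) x) = _
      erw [shiftSub_var]
      have := ih (V := Option V) (x : pow n (Option V))
      exact (congrArg (absorbG rfl) this).trans rfl

theorem sub_var {V : Type u} {n : ℕ} (t : TermN S V n) :
    sub (fun v => .var v) t = t := by
  induction t with
  | var x => exact liftVar_var _ x
  | build i a ih => exact congrArg _ (funext fun k => ih k)

theorem powFun_comp : ∀ (n : ℕ) {X Y Z : Type u} (f : X → Y) (g : Y → Z)
    (x : pow n X), powFun n g (powFun n f x) = powFun n (fun v => g (f v)) x := by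
  intro n
  induction n with
  | zero => intros; rfl
  | succ n ih =>
      intro X Y Z f g x
      show powFun n (Option.map g) (powFun n (Option.map f) x) = _
      erw [ih]
      show powFun n (fun v => Option.map g (Option.map f v)) x
          = powFun n (Option.map fun v => g (f v)) x
      congr 1
      funext v
      cases v <;> rfl

theorem ren_ren {V W U : Type u} (f : V → W) (g : W → U) {n : ℕ}
    (t : TermN S V n) : ren g (ren f t) = ren (fun v => g (f v)) t := by
  induction t with
  | var x => exact congrArg _ (powFun_comp _ f g x)
  | build i a ih => exact congrArg _ (funext fun k => ih k)

theorem ren_absorbG {V W : Type u} (j : V → W) {n : ℕ}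
    (t : TermN S (Option V) n) : ∀ {m : ℕ} (h : n + 1 = m),
    ren j (absorbG h t) = absorbG h (ren (Option.map j) t) := by
  induction t with
  | var x => intro m h; subst h; rfl
  | build i a ih =>
      intro m h
      show TermN.build i (fun k => ren j (absorbG _ (a k)))
          = .build i (fun k => absorbG _ (ren (Option.map j) (a k)))
      exact congrArg _ (funext fun k => ih k _)

theorem sub_absorbG {V W : Type u} (g : V → Term S W) {n : ℕ}
    (t : TermN S (Option V) n) : ∀ {m : ℕ} (h : n + 1 = m),
    sub g (absorbG h t) = absorbG h (sub (shiftSub g) t) := by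
  induction t with
  | var x => intro m h; subst h; rfl
  | build i a ih =>
      intro m h
      show TermN.build i (fun k => sub g (absorbG _ (a k)))
          = .build i (fun k => absorbG _ (sub (shiftSub g) (a k)))
      exact congrArg _ (funext fun k => ih k _)

theorem liftVar_ren : ∀ (n : ℕ) {V V' W W' : Type u}
    (ι : V → V') (j : W → W') (g : V → Term S W) (g' : V' → Term S W'),
    (∀ v, g' (ι v) = ren j (g v)) → ∀ x : pow n V,
    liftVar n g' (powFun n ι x) = ren j (liftVar n g x) := by
  intro n
  induction n with
  | zero => intro V V' W W' ι j g g' hyp x; exact hyp x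
  | succ n ih =>
      intro V V' W W' ι j g g' hyp x
      show absorbG rfl (liftVar n (shiftSub g') (powFun n (Option.map ι) x))
          = ren j (absorbG rfl (liftVar n (shiftSub g) x))
      rw [ren_absorbG]
      refine congrArg _ (ih (Option.map ι) (Option.map j) (shiftSub g) (shiftSub g') ?_ x)
      intro v
      cases v with
      | none => rfl
      | some v =>
          show ren some (g' (ι v)) = ren (Option.map j) (ren some (g v))
          erw [hyp v, ren_ren, ren_ren]
          rfl

theorem sub_ren {V V' W W' : Type u} {n : ℕ} (t : TermN S V n)
    (ι : V → V') (j : W → W') (g : V → Term S W) (g' : V' → Term S W')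
    (hyp : ∀ v, g' (ι v) = ren j (g v)) :
    sub g' (ren ι t) = ren j (sub g t) := by
  induction t generalizing V' W W' with
  | build i a ih =>
      exact congrArg _ (funext fun k => ih k ι j g g' hyp)
  | var x => exact liftVar_ren _ ι j g g' hyp x

theorem shiftSub_sub {V W U : Type u} (f : V → Term S W) (g : W → Term S U) :
    shiftSub (fun v => sub g (f v)) = fun v => sub (shiftSub g) (shiftSub f v) := by
  funext v
  cases v with
  | none => rfl
  | some v =>
      show ren some (sub g (f v)) = sub (shiftSub g) (ren some (f v))
      exact (sub_ren (f v) some some g (shiftSub g) (fun _ => rfl)).symm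

theorem sub_liftVar : ∀ (n : ℕ) {V W U : Type u} (f : V → Term S W)
    (g : W → Term S U) (x : pow n V),
    sub g (liftVar n f x) = liftVar n (fun v => sub g (f v)) x := by
  intro n
  induction n with
  | zero => intros; rfl
  | succ n ih =>
      intro V W U f g x
      show sub g (absorbG rfl (liftVar n (shiftSub f) x))
          = absorbG rfl (liftVar n (shiftSub fun v => sub g (f v)) x)
      erw [sub_absorbG, ih, shiftSub_sub]

theorem sub_sub {V W U : Type u} {n : ℕ} (t : TermN S V n)
    (f : V → Term S W) (g : W → Term S U) :
    sub g (sub f t) = sub (fun v => sub g (f v)) t := by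
  induction t with
  | var x => exact sub_liftVar _ f g x
  | build i a ih => exact congrArg _ (funext fun k => ih k)

theorem liftVar_var' : ∀ (n : ℕ) {V W : Type u} (j : V → W) (x : pow n V),
    liftVar (S := S) n (fun v => .var (j v)) x = .var (powFun n j x) := by
  intro n
  induction n with
  | zero => intros; rfl
  | succ n ih =>
      intro V W j x
      show absorbG rfl (liftVar n (shiftSub fun v => .var (j v)) x) = _
      have h1 : shiftSub (S := S) (fun v : V => .var (j v))
          = fun v => .var (Option.map j v) := by
        funext v; cases v <;> rfl
      rw [h1]
      have := ih (V := Option V) (Option.map j) (x : pow n (Option V))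
      exact (congrArg (absorbG rfl) this).trans rfl

theorem sub_var' {V W : Type u} (j : V → W) {n : ℕ} (t : TermN S V n) :
    sub (fun v => .var (j v)) t = ren j t := by
  induction t with
  | build i a ih => exact congrArg _ (funext fun k => ih k)
  | var x => exact liftVar_var' _ j x

end InitialAux2
namespace InitialAux3
open InitialAux InitialAux2

variable {S : Sig.{u}}

instance termOrd (S : Sig.{u}) (X : Type u) : Preorder (Term S X) where
  le := fun a b => a = b
  le_refl := fun _ => rfl
  le_trans := fun a b c (h : a = b) (h' : b = c) => show a = c from h.trans h'

/-- The term monad. -/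
def ZM (S : Sig.{u}) : RMonad.{u} where
  obj := Term S
  ord := termOrd S
  unit := fun x => .var x
  bind := fun f t => sub f t
  bind_mono := fun f a b h => show sub f a = sub f b from congrArg (sub f) (show a = b from h)
  bind_unit := fun _ _ => rfl
  unit_bind := fun p => sub_var p
  bind_bind := fun f g p => sub_sub p f g

theorem ZM_shift {V W : Type u} (f : V → Term S W) :
    (ZM S).shift f = shiftSub f := by
  funext v
  cases v with
  | none => rfl
  | some v =>
      show sub (fun w => .var (some w)) (f v) = ren some (f v)
      exact sub_var' some (f v)

theorem sub_absorbs : ∀ (a : ℕ) {V W : Type u} {n : ℕ} (f : V → Term S W)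
    (t : TermN S (pow a V) n),
    sub f (absorbs a t) = absorbs a (sub ((ZM S).shiftPow a f) t) := by
  intro a
  induction a with
  | zero => intros; rfl
  | succ a ih =>
      intro V W n f t
      show sub f (absorbG rfl (absorbs a t))
          = absorbG rfl (absorbs a (sub ((ZM S).shiftPow a ((ZM S).shift f)) t))
      rw [sub_absorbG, ih (shiftSub f) t, ZM_shift]

/-- The term representation of `S`. -/
def ZS (S : Sig.{u}) : SigRep S where
  R := ZM S
  rep := fun i X c => .build i fun k => absorbs ((S.ar i).get k) (c k)
  rep_mono := fun i X c d h =>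
    show (TermN.build i fun k => absorbs ((S.ar i).get k) (c k) : Term S X)
        = TermN.build i fun k => absorbs ((S.ar i).get k) (d k) from
      congrArg _ (funext fun k => congrArg _ (show c k = d k from h k))
  rep_hom := fun i X Y f c => by
    show TermN.build i (fun k => sub f (absorbs ((S.ar i).get k) (c k))) = _
    exact congrArg _ (funext fun k => sub_absorbs ((S.ar i).get k) f (c k))

end InitialAux3
namespace InitialAux4
open InitialAux InitialAux2 InitialAux3

variable {S : Sig.{u}}

/-- Shift an environment under one fresh variable. -/
def envShift (M : RMonad.{u}) : ∀ (n : ℕ) {V X : Type u},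
    (pow n V → M.obj X) → pow n (Option V) → M.obj (Option X)
  | 0, _, _, ρ => M.shift ρ
  | n+1, V, _, ρ => envShift M n (V := Option V) ρ

/-- Lift an environment through `a` fresh variables. -/
def liftEnv (M : RMonad.{u}) : ∀ (a : ℕ) {n : ℕ} {V X : Type u},
    (pow n V → M.obj X) → pow (n + a) V → M.obj (pow a X)
  | 0, _, _, _, ρ => ρ
  | a+1, n, V, X, ρ => liftEnv M a (n := n) (V := Option V) (X := Option X) (envShift M n ρ)

/-- Evaluation of a term in a representation, along an environment. -/
noncomputable def evalAux (A : SigRep S) {V : Type u} {n : ℕ} (t : TermN S V n) :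
    ∀ (X : Type u), (pow n V → A.R.obj X) → A.R.obj X :=
  TermN.rec (motive := fun n _ => ∀ X : Type u, (pow n V → A.R.obj X) → A.R.obj X)
    (fun x _X ρ => ρ x)
    (fun i _a ih X ρ =>
      A.rep i X fun k => ih k (pow ((S.ar i).get k) X) (liftEnv A.R ((S.ar i).get k) ρ))
    t

noncomputable def eval (A : SigRep S) {V : Type u} {n : ℕ} (t : TermN S V n)
    {X : Type u} (ρ : pow n V → A.R.obj X) : A.R.obj X := evalAux A t X ρ

theorem eval_var (A : SigRep S) {V : Type u} {n : ℕ} (x : pow n V)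
    {X : Type u} (ρ : pow n V → A.R.obj X) :
    eval A (TermN.var x) ρ = ρ x := rfl

theorem eval_build (A : SigRep S) {V : Type u} {n : ℕ} (i : S.I)
    (a : ∀ k : Fin (S.ar i).length, TermN S V (n + (S.ar i).get k))
    {X : Type u} (ρ : pow n V → A.R.obj X) :
    eval A (TermN.build i a) ρ
      = A.rep i X fun k => eval A (a k) (liftEnv A.R ((S.ar i).get k) ρ) := rfl

theorem liftEnv_pvcast (M : RMonad.{u}) : ∀ (a n : ℕ) {V X : Type u}
    (ρ : pow (n+1) V → M.obj X) (h : (n+a)+1 = (n+1)+a) (x : pow (n+a) (Option V)),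
    liftEnv M a (n := n+1) (V := V) ρ (pvcast (V := V) h x)
      = liftEnv M a (n := n) (V := Option V) ρ x := by
  intro a
  induction a with
  | zero => intro n V X ρ h x; rfl
  | succ a ih =>
      intro n V X ρ h x
      show liftEnv M a (n := n+1) (V := Option V)
          (envShift M (n+1) ρ) (pvcast (V := V) h x)
        = liftEnv M a (n := n) (V := Option (Option V)) (envShift M (n+1) ρ) x
      rw [pvcast_succ (V := V) (show (n+a)+1 = (n+1)+a by omega) h
        (x : pow ((n+a)+1) (Option V))]
      exact ih n (V := Option V) (envShift M (n+1) ρ) _ x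

theorem liftEnv_pvcast' (M : RMonad.{u}) (a : ℕ) {n m : ℕ} (h : n + 1 = m)
    (hk : (n+a)+1 = m+a) {V X : Type u} (ρ : pow m V → M.obj X)
    (x : pow (n+a) (Option V)) :
    liftEnv M a ρ (pvcast (V := V) hk x)
      = liftEnv M a (n := n) (V := Option V) (fun y => ρ (pvcast (V := V) h y)) x := by
  subst h
  exact liftEnv_pvcast M a n ρ hk x

theorem eval_absorbG (A : SigRep S) {V : Type u} {n : ℕ}
    (t : TermN S (Option V) n) : ∀ {m : ℕ} (h : n + 1 = m) {X : Type u}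
    (ρ : pow m V → A.R.obj X),
    eval A (absorbG h t) ρ = eval A t (fun x => ρ (pvcast (V := V) h x)) := by
  induction t with
  | var x => intro m h X ρ; subst h; rfl
  | build i a ih =>
      intro m h X ρ
      rw [show absorbG h (TermN.build i a)
            = TermN.build i (fun k => absorbG (by omega) (a k)) from rfl]
      rw [eval_build, eval_build]
      refine congrArg _ (funext fun k => ?_)
      rw [ih k]
      exact congrArg _ (funext fun x => liftEnv_pvcast' A.R _ h _ ρ x)

theorem eval_absorbG0 (A : SigRep S) {V : Type u} {n : ℕ}
    (t : TermN S (Option V) n) {X : Type u} (ρ : pow (n+1) V → A.R.obj X) :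
    eval A (absorbG rfl t) ρ = eval A t ρ :=
  (eval_absorbG A t rfl ρ).trans rfl

theorem envShift_bind (A : SigRep S) : ∀ (n : ℕ) {V X Y : Type u}
    (g : X → A.R.obj Y) (ρ : pow n V → A.R.obj X) (y : pow n (Option V)),
    envShift A.R n (fun x => A.R.bind g (ρ x)) y
      = A.R.bind (A.R.shift g) (envShift A.R n ρ y) := by
  intro n
  induction n with
  | succ n ih => intro V X Y g ρ y; exact ih (V := Option V) g ρ y
  | zero =>
      intro V X Y g ρ y
      cases y with
      | none =>
          show A.R.unit none = A.R.bind (A.R.shift g) (A.R.unit none)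
          rw [A.R.bind_unit]
          rfl
      | some v =>
          show A.R.bind (fun x => A.R.unit (some x)) (A.R.bind g (ρ v))
              = A.R.bind (A.R.shift g) (A.R.bind (fun x => A.R.unit (some x)) (ρ v))
          rw [A.R.bind_bind, A.R.bind_bind]
          refine congrArg (fun f => A.R.bind f (ρ v)) (funext fun x => ?_)
          rw [A.R.bind_unit]
          rfl

theorem liftEnv_bind (A : SigRep S) : ∀ (a : ℕ) {n : ℕ} {V X Y : Type u}
    (g : X → A.R.obj Y) (ρ : pow n V → A.R.obj X) (y : pow (n+a) V),
    liftEnv A.R a (fun x => A.R.bind g (ρ x)) y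
      = A.R.bind (A.R.shiftPow a g) (liftEnv A.R a ρ y) := by
  intro a
  induction a with
  | zero => intros; rfl
  | succ a ih =>
      intro n V X Y g ρ y
      show liftEnv A.R a (envShift A.R n fun x => A.R.bind g (ρ x)) y = _
      have h1 : (envShift A.R n fun x => A.R.bind g (ρ x))
          = fun y => A.R.bind (A.R.shift g) (envShift A.R n ρ y) :=
        funext fun y => envShift_bind A n g ρ y
      rw [h1]
      exact ih (A.R.shift g) (envShift A.R n ρ) y

theorem bind_eval (A : SigRep S) {V : Type u} {n : ℕ} (t : TermN S V n)
    {X Y : Type u} (g : X → A.R.obj Y) (ρ : pow n V → A.R.obj X) :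
    A.R.bind g (eval A t ρ) = eval A t (fun x => A.R.bind g (ρ x)) := by
  induction t generalizing X Y with
  | var x => rfl
  | build i a ih =>
      rw [eval_build, eval_build, A.rep_hom]
      refine congrArg _ (funext fun k => ?_)
      rw [ih k]
      exact congrArg _ (funext fun x => (liftEnv_bind A _ g ρ x).symm)

theorem envShift_powFun (M : RMonad.{u}) : ∀ (n : ℕ) {V W X : Type u}
    (j : V → W) (ρ : pow n W → M.obj X) (y : pow n (Option V)),
    envShift M n (fun x => ρ (powFun n j x)) y
      = envShift M n ρ (powFun n (Option.map j) y) := by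
  intro n
  induction n with
  | succ n ih => intro V W X j ρ y; exact ih (Option.map j) ρ y
  | zero =>
      intro V W X j ρ y
      cases y <;> rfl

theorem liftEnv_powFun (M : RMonad.{u}) : ∀ (a : ℕ) {n : ℕ} {V W X : Type u}
    (j : V → W) (ρ : pow n W → M.obj X) (y : pow (n+a) V),
    liftEnv M a (fun x => ρ (powFun n j x)) y
      = liftEnv M a ρ (powFun (n+a) j y) := by
  intro a
  induction a with
  | zero => intros; rfl
  | succ a ih =>
      intro n V W X j ρ y
      show liftEnv M a (envShift M n fun x => ρ (powFun n j x)) y = _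
      have h1 : (envShift M n fun x => ρ (powFun n j x))
          = fun y => envShift M n ρ (powFun n (Option.map j) y) :=
        funext fun y => envShift_powFun M n j ρ y
      rw [h1]
      exact ih (Option.map j) (envShift M n ρ) y

theorem eval_ren (A : SigRep S) {V W : Type u} {n : ℕ} (j : V → W)
    (t : TermN S V n) {X : Type u} (ρ : pow n W → A.R.obj X) :
    eval A (ren j t) ρ = eval A t (fun x => ρ (powFun n j x)) := by
  induction t generalizing X with
  | var x => rfl
  | build i a ih =>
      rw [show ren j (TermN.build i a) = TermN.build i (fun k => ren j (a k)) from rfl]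
      rw [eval_build, eval_build]
      refine congrArg _ (funext fun k => ?_)
      rw [ih k]
      exact congrArg _ (funext fun x => (liftEnv_powFun A.R _ j ρ x).symm)

theorem envShift_liftVar (A : SigRep S) : ∀ (n : ℕ) {V W X : Type u}
    (f : V → Term S W) (ρ : pow n W → A.R.obj X) (y : pow n (Option V)),
    envShift A.R n (fun x => eval A (liftVar n f x) ρ) y
      = eval A (liftVar n (shiftSub f) y) (envShift A.R n ρ) := by
  intro n
  induction n with
  | zero =>
      intro V W X f ρ y
      cases y with
      | none => rfl
      | some v =>
          show A.R.bind (fun x => A.R.unit (some x)) (eval A (f v) ρ)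
              = eval A (ren some (f v)) (envShift A.R 0 ρ)
          erw [bind_eval, eval_ren]
          rfl
  | succ n ih =>
      intro V W X f ρ y
      show envShift A.R n (V := Option V)
          (fun x : pow n (Option V) => eval A (liftVar (n+1) f x) ρ) y = _
      have h1 : (fun x : pow n (Option V) => eval A (liftVar (n+1) f x) ρ)
          = fun x : pow n (Option V) => eval A (liftVar n (shiftSub f) x) ρ :=
        funext fun x => eval_absorbG0 A _ ρ
      rw [h1]
      rw [ih (V := Option V) (W := Option W) (shiftSub f) ρ y]
      exact (eval_absorbG0 A (liftVar n (shiftSub (shiftSub f)) y)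
        (envShift A.R (n+1) ρ)).symm

theorem liftEnv_liftVar (A : SigRep S) : ∀ (a : ℕ) {n : ℕ} {V W X : Type u}
    (f : V → Term S W) (ρ : pow n W → A.R.obj X) (y : pow (n+a) V),
    liftEnv A.R a (fun x => eval A (liftVar n f x) ρ) y
      = eval A (liftVar (n+a) f y) (liftEnv A.R a ρ) := by
  intro a
  induction a with
  | zero => intros; rfl
  | succ a ih =>
      intro n V W X f ρ y
      show liftEnv A.R a (envShift A.R n fun x => eval A (liftVar n f x) ρ) y = _
      have h1 : (envShift A.R n fun x => eval A (liftVar n f x) ρ)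
          = fun y => eval A (liftVar n (shiftSub f) y) (envShift A.R n ρ) :=
        funext fun y => envShift_liftVar A n f ρ y
      rw [h1]
      rw [ih (shiftSub f) (envShift A.R n ρ) y]
      exact (eval_absorbG0 A (liftVar (n+a) (shiftSub f) y) _).symm

theorem eval_sub (A : SigRep S) {V : Type u} {n : ℕ} (t : TermN S V n)
    {W : Type u} (f : V → Term S W) {X : Type u} (ρ : pow n W → A.R.obj X) :
    eval A (sub f t) ρ = eval A t (fun x => eval A (liftVar n f x) ρ) := by
  induction t generalizing X with
  | var x => rfl
  | build i a ih =>
      rw [show sub f (TermN.build i a) = TermN.build i (fun k => sub f (a k)) from rfl]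
      rw [eval_build, eval_build]
      refine congrArg _ (funext fun k => ?_)
      rw [ih k]
      exact congrArg _ (funext fun y => (liftEnv_liftVar A _ f ρ y).symm)

end InitialAux4
namespace InitialAux5
open InitialAux InitialAux2 InitialAux3 InitialAux4

variable {S : Sig.{u}}

/-- Reassociation of iterated context extension (an identity function). -/
def acast : ∀ (a : ℕ) {n : ℕ} {V : Type u}, pow n (pow a V) → pow (n + a) V
  | 0, _, _, x => x
  | a+1, n, V, x => acast a (n := n) (V := Option V) x

theorem eval_absorbs (A : SigRep S) : ∀ (a : ℕ) {V : Type u} {n : ℕ}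
    (t : TermN S (pow a V) n) {X : Type u} (ρ : pow (n + a) V → A.R.obj X),
    eval A (absorbs a t) ρ = eval A t (fun x => ρ (acast a x)) := by
  intro a
  induction a with
  | zero => intros; rfl
  | succ a ih =>
      intro V n t X ρ
      show eval A (absorbG rfl (absorbs a t)) ρ = _
      rw [eval_absorbG0 A (absorbs a t) ρ]
      exact ih (V := Option V) t ρ

theorem shift_unit (M : RMonad.{u}) {V : Type u} :
    M.shift (fun v : V => M.unit v) = fun v => M.unit v := by
  funext v
  cases v with
  | none => rfl
  | some v =>
      show M.bind (fun x => M.unit (some x)) (M.unit v) = M.unit (some v)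
      rw [M.bind_unit]

theorem liftEnv_unit (A : SigRep S) : ∀ (a : ℕ) {V : Type u} (x : pow 0 (pow a V)),
    liftEnv A.R a (n := 0) (fun v => A.R.unit v) (acast a (n := 0) x)
      = A.R.unit x := by
  intro a
  induction a with
  | zero => intros; rfl
  | succ a ih =>
      intro V x
      show liftEnv A.R a (n := 0) (V := Option V)
          (envShift A.R 0 (fun v : V => A.R.unit v)) (acast a (n := 0) x) = _
      rw [show (envShift A.R 0 (fun v : V => A.R.unit v))
            = fun v : Option V => A.R.unit v from shift_unit A.R]
      exact ih (V := Option V) x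

theorem evalZrep (A : SigRep S) (i : S.I) (X : Type u)
    (c : ∀ k : Fin (S.ar i).length, Term S (pow ((S.ar i).get k) X)) :
    eval A ((ZS S).rep i X c) (fun v => A.R.unit v)
      = A.rep i X fun k => eval A (c k) (fun v => A.R.unit v) := by
  show eval A (TermN.build i fun k => absorbs ((S.ar i).get k) (c k)) _ = _
  rw [eval_build]
  refine congrArg _ (funext fun k => ?_)
  rw [eval_absorbs A ((S.ar i).get k) (c k)]
  exact congrArg _ (funext fun x => liftEnv_unit A ((S.ar i).get k) x)

/-- The unique morphism from the term representation. -/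
noncomputable def toRep (A : SigRep S) : SigRepHom (ZS S) A where
  mh :=
    { app := fun X t => eval A t (fun v => A.R.unit v)
      mono := fun X a b h => by
        rw [show a = b from h]
      app_unit := fun x => rfl
      app_bind := fun f p => by
        show eval A (sub f p) _ = _
        rw [eval_sub A p f]
        rw [bind_eval A p]
        refine congrArg _ (funext fun v => ?_)
        show eval A (f v) _ = A.R.bind _ (A.R.unit v)
        erw [A.R.bind_unit] }
  mh_rep := fun i X c => evalZrep A i X c

/-- Size of a term. -/
noncomputable def sizeN {V : Type u} {n : ℕ} (t : TermN S V n) : ℕ :=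
  TermN.rec (motive := fun _ _ => ℕ) (fun _ => 1)
    (fun i _a ih => 1 + Finset.univ.sum fun k => ih k) t

theorem sizeN_pos {V : Type u} {n : ℕ} (t : TermN S V n) : 1 ≤ sizeN t := by
  cases t with
  | var x => exact le_refl _
  | build i a =>
      show 1 ≤ 1 + Finset.univ.sum fun k => sizeN (a k)
      exact Nat.le_add_right 1 _

theorem sizeN_extractG {V : Type u} {n : ℕ} (t : TermN S V n) :
    ∀ {m : ℕ} (h : n = m + 1), sizeN (extractG h t) = sizeN t := by
  induction t with
  | var x => intro m h; rfl
  | build i a ih =>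
      intro m h
      show 1 + Finset.univ.sum (fun k => sizeN (extractG _ (a k))) = 1 + _
      exact congrArg _ (Finset.sum_congr rfl fun k _ => ih k _)

theorem sizeN_extracts : ∀ (a : ℕ) {V : Type u} {n : ℕ} (t : TermN S V (n + a)),
    sizeN (extracts a t) = sizeN t := by
  intro a
  induction a with
  | zero => intros; rfl
  | succ a ih =>
      intro V n t
      show sizeN (extracts a (extractG rfl t)) = _
      rw [ih (extractG rfl t), sizeN_extractG t rfl]

theorem sizeN_lt {V : Type u} {n : ℕ} (i : S.I)
    (a : ∀ k : Fin (S.ar i).length, TermN S V (n + (S.ar i).get k))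
    (k : Fin (S.ar i).length) : sizeN (a k) < sizeN (TermN.build i a) := by
  show sizeN (a k) < 1 + Finset.univ.sum fun k => sizeN (a k)
  have : sizeN (a k) ≤ Finset.univ.sum fun k => sizeN (a k) :=
    Finset.single_le_sum (f := fun k => sizeN (a k)) (fun _ _ => Nat.zero_le _) (Finset.mem_univ k)
  omega

theorem unique_app (A : SigRep S) (g : SigRepHom (ZS S) A) : ∀ (N : ℕ)
    {V : Type u} (t : Term S V), sizeN t ≤ N →
    g.mh.app V t = eval A t (fun v => A.R.unit v) := by
  intro N
  induction N with
  | zero =>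
      intro V t h
      exact absurd (le_trans (sizeN_pos t) h) (by omega)
  | succ N ih =>
      intro V t h
      cases t with
      | var x => exact g.mh.app_unit x
      | build i a =>
          have hrw : (TermN.build i a : Term S V)
              = (ZS S).rep i V (fun k => extracts ((S.ar i).get k) (a k)) :=
            congrArg _ (funext fun k => (absorbs_extracts ((S.ar i).get k) (a k)).symm)
          erw [hrw, g.mh_rep, evalZrep]
          refine congrArg _ (funext fun k => ?_)
          refine ih (extracts ((S.ar i).get k) (a k)) ?_
          have h1 := sizeN_extracts ((S.ar i).get k) (a k)
          have h2 := sizeN_lt i a k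
          have h3 : sizeN (TermN.build i a) ≤ N + 1 := h
          omega

theorem SigRepHom_ext {A B : SigRep S} (f g : SigRepHom A B)
    (h : ∀ (X : Type u) (t : A.R.obj X), f.mh.app X t = g.mh.app X t) : f = g := by
  obtain ⟨⟨fa, fm, fu, fb⟩, fr⟩ := f
  obtain ⟨⟨ga, gm, gu, gb⟩, gr⟩ := g
  have : fa = ga := funext fun X => funext fun t => h X t
  subst this
  rfl

end InitialAux5

/-- The category `Rep^Δ(S)` of representations of a 1-signature `S` in relative
monads on `Δ` has an initial object; the underlying monad of the initial
representation associates to any set `V` the set of terms of the language specified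
by `S` with free variables in `V`, equipped with the discrete (diagonal) preorder. -/
theorem initial_representation (S : Sig.{u}) :
    ∃ Z : SigRep S, Nonempty (Limits.IsInitial Z) ∧
      Z.R.obj = (fun V => Term S V) ∧
      (∀ (V : Type u) (x y : Z.R.obj V), x ≤ y ↔ x = y) := by
  refine ⟨InitialAux3.ZS S, ⟨Limits.IsInitial.ofUniqueHom
      (fun A => InitialAux5.toRep A) ?_⟩, rfl, fun V x y => Iff.rfl⟩
  intro A m
  refine InitialAux5.SigRepHom_ext m (InitialAux5.toRep A) fun X t => ?_
  exact InitialAux5.unique_app A m (InitialAux5.sizeN t) t (le_refl _)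
end

section
/- Let S be a 1-signature and let Σ denote the initial representation of S in Rep^Δ(S). Let A be a set of S-inequations, and for each representation R of (S, A) let i_R : Σ → R denote the initial morphism of representations of S. Define the preorder ≤_A on each set Σ(X) by: x ≤_A y iff for all representations R of (S, A), i_R(x) ≤ i_R(y) in R(X). Then for any algebraic S-module V, any set X, and any x, y ∈ V(Σ)(X): x ≤_A y (with respect to the preorder on V(Σ)(X) induced componentwise by ≤_A) if and only if for all representations R of (S, A), V(i_R)(x) ≤ V(i_R)(y) in V(R)(X). -/
open CategoryTheory

universe v₂ u u₂

/-- A module over a relative monad `P` on `Δ`, with codomain the category `PS` of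
preordered sets and arbitrary (not necessarily monotone) maps: an object map sending
sets to preordered sets, together with a module substitution (a plain map) satisfying
the two module laws. -/
structure PSMod (P : RMonad.{u}) : Type (u + 1) where
  obj : Type u → Type u
  ord : ∀ X : Type u, Preorder (obj X)
  msubst : ∀ {X Y : Type u}, (X → P.obj Y) → obj X → obj Y
  msubst_unit : ∀ {X : Type u} (m : obj X), msubst (fun x : X => P.unit x) m = m
  msubst_msubst : ∀ {X Y Z : Type u} (f : X → P.obj Y) (g : Y → P.obj Z) (m : obj X),
      msubst g (msubst f m) = msubst (fun x => P.bind g (f x)) m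

attribute [instance] PSMod.ord

/-- A morphism of `P`-modules with codomain `PS`: a family of (not necessarily
monotone) maps commuting with the module substitutions. -/
structure PSModHom {P : RMonad.{u}} (M N : PSMod P) : Type (u + 1) where
  app : ∀ X : Type u, M.obj X → N.obj X
  comm : ∀ {X Y : Type u} (f : X → P.obj Y) (m : M.obj X),
      app Y (M.msubst f m) = N.msubst f (app X m)

/-- The tautological module of `P`, regarded as a module with codomain `PS`. -/
def tautPS (P : RMonad.{u}) : PSMod P :=
  ⟨P.obj, P.ord, P.bind, P.unit_bind, P.bind_bind⟩

/-- The derived module: object map `V ↦ M (V + {*})`, with the substitution of `M`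
precomposed with the shifted map. -/
def derivPS {P : RMonad.{u}} (M : PSMod P) : PSMod P where
  obj X := M.obj (Option X)
  ord X := M.ord (Option X)
  msubst f := M.msubst (P.shift f)
  msubst_unit m := by simp only [RMonad.shift_unit, M.msubst_unit]
  msubst_msubst f g m := by simp only [M.msubst_msubst, RMonad.shift_bind]

/-- The product of two `P`-modules with codomain `PS`, with componentwise
substitution and the product preorder. -/
def prodPS {P : RMonad.{u}} (M N : PSMod P) : PSMod P where
  obj X := M.obj X × N.obj X
  ord X := inferInstance
  msubst f m := (M.msubst f m.1, N.msubst f m.2)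
  msubst_unit m := by simp [M.msubst_unit, N.msubst_unit]
  msubst_msubst f g m := by simp [M.msubst_msubst, N.msubst_msubst]

/-- The pullback of a `Q`-module with codomain `PS` along a morphism of relative
monads `h : P ⟶ Q`. -/
def pbPS {P Q : RMonad.{u}} (h : RMonadHom P Q) (M : PSMod Q) : PSMod P where
  obj := M.obj
  ord := M.ord
  msubst f := M.msubst (fun x => h.app _ (f x))
  msubst_unit {X} m := by
    have e : (fun x : X => h.app X (P.unit x)) = fun x : X => Q.unit x :=
      funext fun x => h.app_unit x
    show M.msubst (fun x : X => h.app X (P.unit x)) m = m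
    rw [e, M.msubst_unit]
  msubst_msubst {X Y Z} f g m := by
    show M.msubst (fun x => h.app Z (g x)) (M.msubst (fun x => h.app Y (f x)) m)
      = M.msubst (fun x => h.app Z (P.bind g (f x))) m
    rw [M.msubst_msubst]
    congr 1
    funext x
    rw [h.app_bind]

/-- An `S`-module: a functor from the category `Rep^Δ(S)` of representations of `S`
to the category of pairs (relative monad on `Δ`, module over it with codomain `PS`)
commuting with the forgetful functor to relative monads on `Δ`.  Concretely: each
representation `R` is sent to an `R`-module `M R` with codomain `PS`, and each
morphism of representations `f : A ⟶ B` to a module morphism `M A → f*(M B)` over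
the monad morphism `f` itself, functorially. -/
structure SMod (S : Sig.{u}) : Type (u + 1) where
  M : ∀ R : SigRep S, PSMod R.R
  Mmap : ∀ {A B : SigRep S} (f : A ⟶ B), PSModHom (M A) (pbPS f.mh (M B))
  Mmap_id : ∀ A : SigRep S, (Mmap (𝟙 A)).app = fun _ m => m
  Mmap_comp : ∀ {A B C : SigRep S} (f : A ⟶ B) (g : B ⟶ C),
      (Mmap (f ≫ g)).app = fun X m => (Mmap g).app X ((Mmap f).app X m)

/-- A half-equation: a morphism of `S`-modules, i.e.\ a natural transformation which
becomes the identity when composed with the forgetful functor to relative monads. -/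
structure HalfEq {S : Sig.{u}} (U V : SMod S) : Type (u + 1) where
  app : ∀ R : SigRep S, PSModHom (U.M R) (V.M R)
  natural : ∀ {A B : SigRep S} (f : A ⟶ B) (X : Type u) (m : (U.M A).obj X),
      (app B).app X ((U.Mmap f).app X m) = (V.Mmap f).app X ((app A).app X m)

/-- The category of `S`-modules and half-equations. -/
instance (S : Sig.{u}) : Category (SMod S) where
  Hom := HalfEq
  id U := ⟨fun R => ⟨fun _ m => m, fun _ _ => rfl⟩, fun _ _ _ => rfl⟩
  comp {U V W} α β := ⟨fun R => ⟨fun X m => (β.app R).app X ((α.app R).app X m),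
      fun f m => by simp only [(α.app _).comm, (β.app _).comm]⟩,
    fun f X m => by simp only [α.natural, β.natural] <;> rfl⟩
  id_comp f := rfl
  comp_id f := rfl
  assoc f g h := rfl

lemma RMonadHom.app_shift {P Q : RMonad.{u}} (h : RMonadHom P Q) {X Y : Type u}
    (f : X → P.obj Y) :
    (fun x => h.app (Option Y) (P.shift f x)) = Q.shift (fun x => h.app Y (f x)) := by
  funext x
  cases x with
  | none => simp [RMonad.shift, h.app_unit]
  | some x => simp [RMonad.shift, RMonad.map, h.app_bind, h.app_unit]

/-- The tautological `S`-module `Θ : R ↦ R̂`. -/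
def tautSMod (S : Sig.{u}) : SMod S where
  M R := tautPS R.R
  Mmap {_ _} f := ⟨f.mh.app, fun g m => f.mh.app_bind g m⟩
  Mmap_id _ := rfl
  Mmap_comp _ _ := rfl

/-- The derivation of an `S`-module. -/
def derivSMod {S : Sig.{u}} (U : SMod S) : SMod S where
  M R := derivPS (U.M R)
  Mmap {A B} f :=
    ⟨fun X m => (U.Mmap f).app (Option X) m, by
      intro X Y g (m : (U.M A).obj (Option X))
      show (U.Mmap f).app (Option Y) ((U.M A).msubst (A.R.shift g) m)
        = (U.M B).msubst (B.R.shift (fun x => f.mh.app Y (g x)))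
            ((U.Mmap f).app (Option X) m)
      rw [(U.Mmap f).comm]
      show (U.M B).msubst (fun x => f.mh.app (Option Y) (A.R.shift g x))
            ((U.Mmap f).app (Option X) m) = _
      rw [RMonadHom.app_shift]⟩
  Mmap_id _ := by simp only [U.Mmap_id] <;> rfl
  Mmap_comp _ _ := by simp only [U.Mmap_comp] <;> rfl

/-- The product of two `S`-modules. -/
def prodSMod {S : Sig.{u}} (U V : SMod S) : SMod S where
  M R := prodPS (U.M R) (V.M R)
  Mmap {A B} f :=
    ⟨fun X m => ((U.Mmap f).app X m.1, (V.Mmap f).app X m.2), by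
      intro X Y g m
      show ((U.Mmap f).app Y ((U.M A).msubst g m.1),
            (V.Mmap f).app Y ((V.M A).msubst g m.2)) = _
      rw [(U.Mmap f).comm, (V.Mmap f).comm]
      rfl⟩
  Mmap_id _ := by
    simp only [U.Mmap_id, V.Mmap_id]
    rfl
  Mmap_comp f g := by
    simp only [U.Mmap_comp, V.Mmap_comp] <;> rfl

/-- Codes for algebraic `S`-modules: the tautological `S`-module is algebraic, and
algebraic `S`-modules are closed under derivation and binary products. -/
inductive AlgCode : Type u
  | taut : AlgCode
  | deriv : AlgCode → AlgCode
  | prod : AlgCode → AlgCode → AlgCode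

/-- The algebraic `S`-module determined by a code. -/
def algSMod (S : Sig.{u}) : AlgCode.{u} → SMod S
  | .taut => tautSMod S
  | .deriv c => derivSMod (algSMod S c)
  | .prod c d => prodSMod (algSMod S c) (algSMod S d)

/-- An `S`-inequation: a pair of parallel half-equations. -/
structure Ineq (S : Sig.{u}) : Type (u + 1) where
  dom : SMod S
  cod : SMod S
  lhs : HalfEq dom cod
  rhs : HalfEq dom cod

/-- A representation `R` of `S` satisfies the inequation `α ≤ γ : U → V` if
`α^R_X(m) ≤ γ^R_X(m)` pointwise. -/
def satisfies {S : Sig.{u}} (R : SigRep S) (e : Ineq S) : Prop :=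
  ∀ (X : Type u) (m : (e.dom.M R).obj X),
    (e.lhs.app R).app X m ≤ (e.rhs.app R).app X m

/-- The componentwise extension of a family of relations on the carriers of (the
monad underlying) a representation `R` to the carriers of an algebraic `S`-module. -/
def algRel {S : Sig.{u}} (R : SigRep S)
    (r : ∀ X : Type u, R.R.obj X → R.R.obj X → Prop) :
    ∀ (c : AlgCode.{u}) (X : Type u),
      ((algSMod S c).M R).obj X → ((algSMod S c).M R).obj X → Prop
  | .taut, X, a, b => r X a b
  | .deriv c, X, a, b => algRel R r c (Option X) a b
  | .prod c d, X, a, b => algRel R r c X a.1 b.1 ∧ algRel R r d X a.2 b.2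

/-- Let `Sigma0` be the initial representation of `S`, let `A` be a set of
`S`-inequations, and for a representation `R` of `(S, A)` let `i_R : Sigma0 ⟶ R` be the
initial morphism.  Define `x ≤_A y` on `Sigma0(X)` by: `i_R(x) ≤ i_R(y)` for all
representations `R` of `(S, A)`.  Then for any algebraic `S`-module `V` (given by a
code `c`), any set `X` and any `x, y ∈ V(Sigma0)(X)`: `x ≤_A y` — with respect to the
preorder induced componentwise by `≤_A` — if and only if for all representations `R`
of `(S, A)`, `V(i_R)(x) ≤ V(i_R)(y)` in `V(R)(X)`. -/
theorem algebraic_order_characterisation (S : Sig.{u}) (A : Set (Ineq S))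
    (Sigma0 : SigRep S) (hInit : Limits.IsInitial Sigma0) (c : AlgCode.{u}) (X : Type u)
    (x y : ((algSMod S c).M Sigma0).obj X) :
    algRel Sigma0
      (fun Z a b => ∀ R : SigRep S, (∀ e ∈ A, satisfies R e) →
        (hInit.to R).mh.app Z a ≤ (hInit.to R).mh.app Z b) c X x y
    ↔ (∀ R : SigRep S, (∀ e ∈ A, satisfies R e) →
        ((algSMod S c).Mmap (hInit.to R)).app X x
          ≤ ((algSMod S c).Mmap (hInit.to R)).app X y) := by
  induction c generalizing X with
  | taut => exact Iff.rfl
  | deriv c ih => exact ih (Option X) x y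
  | prod c d ihc ihd =>
    constructor
    · rintro ⟨h1, h2⟩ R hR
      exact ⟨(ihc X x.1 y.1).1 h1 R hR, (ihd X x.2 y.2).1 h2 R hR⟩
    · intro h
      exact ⟨(ihc X x.1 y.1).2 (fun R hR => (h R hR).1),
        (ihd X x.2 y.2).2 (fun R hR => (h R hR).2)⟩
end
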